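/- Let (λ, v) with v = (x; y; z) ∈ ℂ^{n+m+l} be an eigenpair of G_{α,β} = I − P⁻¹𝓑 with λ ≠ 0 and λ ≠ 1, normalized so that ‖y‖₂ = 1. Set a = yᴴ(αI + βBBᵀ)y, c = yᴴ(αI + βBBᵀ)y − yᴴBA⁻¹Bᵀy, and b = 2yᴴ(αI + βBBᵀ)y − yᴴCᵀ(αI + βCCᵀ)⁻¹Cy − yᴴBA⁻¹Bᵀy. Then a > 0, and λ satisfies the quadratic equation λ² − (b/a)λ + (c/a) = 0. -/

import Mathlib

open Matrix

/-- The double saddle point matrix 𝓑 = [[A, Bᵀ, 0], [−B, 0, −Cᵀ], [0, C, 0]]. -/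
def calB {n m l : ℕ} (A : Matrix (Fin n) (Fin n) ℝ) (B : Matrix (Fin m) (Fin n) ℝ)
    (C : Matrix (Fin l) (Fin m) ℝ) :
    Matrix ((Fin n ⊕ Fin m) ⊕ Fin l) ((Fin n ⊕ Fin m) ⊕ Fin l) ℝ :=
  fromBlocks (fromBlocks A Bᵀ (-B) 0) (fromRows 0 (-Cᵀ)) (fromCols 0 C) 0

/-- The block upper triangular preconditioner
`P = [[A, Bᵀ, 0], [0, αI + βBBᵀ, −Cᵀ], [0, 0, αI + βCCᵀ]]`. -/
def precondP {n m l : ℕ} (α β : ℝ) (A : Matrix (Fin n) (Fin n) ℝ)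
    (B : Matrix (Fin m) (Fin n) ℝ) (C : Matrix (Fin l) (Fin m) ℝ) :
    Matrix ((Fin n ⊕ Fin m) ⊕ Fin l) ((Fin n ⊕ Fin m) ⊕ Fin l) ℝ :=
  fromBlocks
    (fromBlocks A Bᵀ 0 (α • (1 : Matrix (Fin m) (Fin m) ℝ) + β • (B * Bᵀ)))
    (fromRows 0 (-Cᵀ)) 0 (α • (1 : Matrix (Fin l) (Fin l) ℝ) + β • (C * Cᵀ))

/-- The iteration matrix `G_{α,β} = I − P⁻¹ 𝓑`. -/
noncomputable def iterG {n m l : ℕ} (α β : ℝ) (A : Matrix (Fin n) (Fin n) ℝ)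
    (B : Matrix (Fin m) (Fin n) ℝ) (C : Matrix (Fin l) (Fin m) ℝ) :
    Matrix ((Fin n ⊕ Fin m) ⊕ Fin l) ((Fin n ⊕ Fin m) ⊕ Fin l) ℝ :=
  1 - (precondP α β A B C)⁻¹ * calB A B C

section Helpers

lemma fromRows_mapC {p p' q : Type*} (M : Matrix p q ℝ) (N : Matrix p' q ℝ) :
    (fromRows M N).map Complex.ofReal = fromRows (M.map Complex.ofReal) (N.map Complex.ofReal) := by
  ext (i|i) j <;> rfl

lemma fromColumns_mapC {p q q' : Type*} (M : Matrix p q ℝ) (N : Matrix p q' ℝ) :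
    (fromCols M N).map Complex.ofReal =
      fromCols (M.map Complex.ofReal) (N.map Complex.ofReal) := by
  ext i (j|j) <;> rfl

lemma mapC_mul {p q r : Type*} [Fintype q] (M : Matrix p q ℝ) (N : Matrix q r ℝ) :
    (M * N).map Complex.ofReal = M.map Complex.ofReal * N.map Complex.ofReal :=
  Matrix.map_mul (f := Complex.ofRealHom)

lemma mapC_one {q : Type*} [Fintype q] [DecidableEq q] :
    (1 : Matrix q q ℝ).map Complex.ofReal = 1 :=
  Matrix.map_one _ (map_zero Complex.ofRealHom) (map_one Complex.ofRealHom)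

lemma mapC_zero {p q : Type*} : (0 : Matrix p q ℝ).map Complex.ofReal = 0 := by
  ext i j; simp

lemma mapC_neg {p q : Type*} (M : Matrix p q ℝ) :
    (-M).map Complex.ofReal = -(M.map Complex.ofReal) := by
  ext i j; simp

lemma dot_star_self_im {k : Type*} [Fintype k] (u : k → ℂ) : (star u ⬝ᵥ u).im = 0 := by
  simp [dotProduct, ← Complex.normSq_eq_conj_mul_self]

lemma dot_star_self_re {k : Type*} [Fintype k] (u : k → ℂ) : 0 ≤ (star u ⬝ᵥ u).re := by
  simp only [dotProduct, Pi.star_apply, RCLike.star_def, ← Complex.normSq_eq_conj_mul_self,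
    Complex.re_sum, Complex.ofReal_re]
  exact Finset.sum_nonneg fun i _ => Complex.normSq_nonneg _

lemma quad_im_zero {k : Type*} [Fintype k] (M : Matrix k k ℝ) (hM : Mᵀ = M) (y : k → ℂ) :
    (star y ⬝ᵥ (M.map Complex.ofReal).mulVec y).im = 0 := by
  set Mc := M.map Complex.ofReal with hMc
  have hH : Mcᴴ = Mc := by
    ext i j
    simp only [conjTranspose_apply, hMc, Matrix.map_apply, RCLike.star_def, Complex.conj_ofReal]
    rw [show M j i = M i j from (congrFun (congrFun hM j) i).symm ▸ rfl]
  have key : (starRingEnd ℂ) (star y ⬝ᵥ Mc *ᵥ y) = star y ⬝ᵥ Mc *ᵥ y := by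
    calc (starRingEnd ℂ) (star y ⬝ᵥ Mc *ᵥ y)
        = star (star y ⬝ᵥ Mc *ᵥ y) := rfl
      _ = star (Mc *ᵥ y) ⬝ᵥ star (star y) := by rw [star_dotProduct_star]
      _ = (star y ᵥ* Mcᴴ) ⬝ᵥ y := by rw [star_mulVec, star_star]
      _ = star y ⬝ᵥ Mc *ᵥ y := by rw [hH, ← dotProduct_mulVec]
  exact Complex.conj_eq_iff_im.mp key

lemma smul_posSemidef {k : Type*} [Fintype k] {M : Matrix k k ℝ} (hM : M.PosSemidef)
    {r : ℝ} (hr : 0 ≤ r) : (r • M).PosSemidef := by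
  refine posSemidef_iff_dotProduct_mulVec.mpr ⟨?_, fun x => ?_⟩
  · unfold Matrix.IsHermitian
    rw [conjTranspose_smul, hM.1, star_trivial]
  · rw [smul_mulVec, dotProduct_smul, smul_eq_mul]
    exact mul_nonneg hr (hM.dotProduct_mulVec_nonneg x)

lemma smul_one_posDef {k : Type*} [Fintype k] [DecidableEq k] {r : ℝ} (hr : 0 < r) :
    (r • (1 : Matrix k k ℝ)).PosDef := by
  rw [smul_one_eq_diagonal]
  exact Matrix.posDef_diagonal_iff.mpr fun _ => hr

lemma BBt_posSemidef {p q : Type*} [Fintype p] [Fintype q] (B : Matrix p q ℝ) :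
    (B * Bᵀ).PosSemidef := by
  have := Matrix.posSemidef_self_mul_conjTranspose B
  rwa [show Bᴴ = Bᵀ from rfl] at this

end Helpers

set_option maxHeartbeats 1600000 in
theorem eigenvalue_satisfies_quadratic {n m l : ℕ} (α β : ℝ)
    (A : Matrix (Fin n) (Fin n) ℝ) (B : Matrix (Fin m) (Fin n) ℝ)
    (C : Matrix (Fin l) (Fin m) ℝ)
    (hA : A.PosDef) (hB : B.rank = m) (hC : C.rank = l) (hnm : m ≤ n) (hml : l ≤ m)
    (hα : 0 < α) (hβ : 0 < β)
    (lam : ℂ) (x : Fin n → ℂ) (y : Fin m → ℂ) (z : Fin l → ℂ)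
    (hv : Sum.elim (Sum.elim x y) z ≠ 0)
    (heig : ((iterG α β A B C).map Complex.ofReal).mulVec (Sum.elim (Sum.elim x y) z) =
      lam • Sum.elim (Sum.elim x y) z)
    (hlam0 : lam ≠ 0) (hlam1 : lam ≠ 1)
    (hy : star y ⬝ᵥ y = 1) :
    let a : ℂ := star y ⬝ᵥ
      (((α • (1 : Matrix (Fin m) (Fin m) ℝ) + β • (B * Bᵀ))).map Complex.ofReal).mulVec y
    let s : ℂ := star y ⬝ᵥ ((B * A⁻¹ * Bᵀ).map Complex.ofReal).mulVec y
    let t : ℂ := star y ⬝ᵥ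
      ((Cᵀ * (α • (1 : Matrix (Fin l) (Fin l) ℝ) + β • (C * Cᵀ))⁻¹ * C).map
        Complex.ofReal).mulVec y
    let c : ℂ := a - s
    let b : ℂ := 2 * a - t - s
    a.im = 0 ∧ b.im = 0 ∧ c.im = 0 ∧ 0 < a.re ∧
      lam ^ 2 - (b / a) * lam + c / a = 0 := by
  intro a s t c b
  -- real matrices
  set S : Matrix (Fin m) (Fin m) ℝ := α • (1 : Matrix (Fin m) (Fin m) ℝ) + β • (B * Bᵀ) with hSdef
  set T : Matrix (Fin l) (Fin l) ℝ := α • (1 : Matrix (Fin l) (Fin l) ℝ) + β • (C * Cᵀ) with hTdef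
  -- complex matrices
  set Ac := A.map Complex.ofReal with hAc
  set Bc := B.map Complex.ofReal with hBc
  set Btc := Bᵀ.map Complex.ofReal with hBtc
  set Cc := C.map Complex.ofReal with hCc
  set Ctc := Cᵀ.map Complex.ofReal with hCtc
  set Sc := S.map Complex.ofReal with hSc
  set Tc := T.map Complex.ofReal with hTc
  -- symmetry
  have hAs : Aᵀ = A := hA.isHermitian
  have hSs : Sᵀ = S := by
    rw [hSdef, transpose_add, transpose_smul, transpose_smul, transpose_one, transpose_mul,
      transpose_transpose]
  have hTs : Tᵀ = T := by
    rw [hTdef, transpose_add, transpose_smul, transpose_smul, transpose_one, transpose_mul,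
      transpose_transpose]
  -- positive definiteness and determinants
  have hSpd : S.PosDef := (smul_one_posDef hα).add_posSemidef (smul_posSemidef (BBt_posSemidef B) hβ.le)
  have hTpd : T.PosDef := (smul_one_posDef hα).add_posSemidef (smul_posSemidef (BBt_posSemidef C) hβ.le)
  have hAdet : IsUnit A.det := hA.det_pos.ne'.isUnit
  have hSdet : IsUnit S.det := hSpd.det_pos.ne'.isUnit
  have hTdet : IsUnit T.det := hTpd.det_pos.ne'.isUnit
  have hPdet : IsUnit (precondP α β A B C).det := by
    rw [precondP, det_fromBlocks_zero₂₁, det_fromBlocks_zero₂₁]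
    exact (hAdet.mul hSdet).mul hTdet
  -- complex inverse facts
  have hAinv : (A⁻¹.map Complex.ofReal) * Ac = 1 := by
    rw [hAc, ← mapC_mul, nonsing_inv_mul A hAdet, mapC_one]
  have hTinv : (T⁻¹.map Complex.ofReal) * Tc = 1 := by
    rw [hTc, ← mapC_mul, nonsing_inv_mul T hTdet, mapC_one]
  have hPinv : (precondP α β A B C).map Complex.ofReal *
      ((precondP α β A B C)⁻¹.map Complex.ofReal) = 1 := by
    rw [← mapC_mul, mul_nonsing_inv _ hPdet, mapC_one]
  -- the eigen-equation over ℂ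
  set vv := Sum.elim (Sum.elim x y) z with hvvdef
  have hmap : (iterG α β A B C).map Complex.ofReal =
      1 - (precondP α β A B C)⁻¹.map Complex.ofReal * (calB A B C).map Complex.ofReal := by
    calc (iterG α β A B C).map Complex.ofReal
        = Complex.ofRealHom.mapMatrix (1 - (precondP α β A B C)⁻¹ * calB A B C) := rfl
      _ = _ := by rw [_root_.map_sub, _root_.map_one, _root_.map_mul]; rfl
  have h1 : ((precondP α β A B C)⁻¹.map Complex.ofReal * (calB A B C).map Complex.ofReal) *ᵥ vv
      = (1 - lam) • vv := by
    have h := heig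
    rw [hmap, sub_mulVec, one_mulVec] at h
    funext i
    have h' := congrFun h i
    simp only [Pi.sub_apply, Pi.smul_apply, smul_eq_mul] at h' ⊢
    linear_combination -h'
  have h2 : (calB A B C).map Complex.ofReal *ᵥ vv
      = (1 - lam) • ((precondP α β A B C).map Complex.ofReal *ᵥ vv) := by
    calc (calB A B C).map Complex.ofReal *ᵥ vv
        = ((precondP α β A B C).map Complex.ofReal *
            ((precondP α β A B C)⁻¹.map Complex.ofReal * (calB A B C).map Complex.ofReal)) *ᵥ vv := by
          rw [← mul_assoc, hPinv, one_mul]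
      _ = (precondP α β A B C).map Complex.ofReal *ᵥ
            (((precondP α β A B C)⁻¹.map Complex.ofReal * (calB A B C).map Complex.ofReal) *ᵥ vv) := by
          rw [mulVec_mulVec]
      _ = _ := by rw [h1, mulVec_smul]
  -- block forms
  have hcalBmap : (calB A B C).map Complex.ofReal =
      fromBlocks (fromBlocks Ac Btc (-Bc) 0) (fromRows 0 (-Ctc)) (fromCols 0 Cc) 0 := by
    rw [calB, fromBlocks_map, fromBlocks_map, fromRows_mapC, fromColumns_mapC,
      mapC_zero, mapC_zero, mapC_zero, mapC_zero, mapC_neg, mapC_neg, hAc, hBc, hBtc, hCc, hCtc]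
  have hPmap : (precondP α β A B C).map Complex.ofReal =
      fromBlocks (fromBlocks Ac Btc 0 Sc) (fromRows 0 (-Ctc)) 0 Tc := by
    rw [precondP, ← hSdef, ← hTdef, fromBlocks_map, fromBlocks_map, fromRows_mapC,
      mapC_zero, mapC_zero, mapC_zero, mapC_neg, hAc, hBtc, hCtc, hSc, hTc]
  rw [hcalBmap, hPmap, hvvdef] at h2
  -- the three block equations
  have E1 : Ac *ᵥ x + Btc *ᵥ y = (1 - lam) • (Ac *ᵥ x + Btc *ᵥ y) := by
    funext i
    have h := congrFun h2 (Sum.inl (Sum.inl i))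
    simp only [fromBlocks_mulVec, fromRows_mulVec, fromCols_mulVec_sumElim, zero_mulVec,
      mulVec_zero, Pi.add_apply, Pi.smul_apply, Sum.elim_inl, Sum.elim_inr,
      Sum.elim_comp_inl, Sum.elim_comp_inr, Pi.zero_apply,
      add_zero, zero_add, smul_eq_mul] at h ⊢
    linear_combination h
  have E2 : (-Bc) *ᵥ x + (-Ctc) *ᵥ z = (1 - lam) • (Sc *ᵥ y + (-Ctc) *ᵥ z) := by
    funext i
    have h := congrFun h2 (Sum.inl (Sum.inr i))
    simp only [fromBlocks_mulVec, fromRows_mulVec, fromCols_mulVec_sumElim, zero_mulVec,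
      mulVec_zero, Pi.add_apply, Pi.smul_apply, Sum.elim_inl, Sum.elim_inr,
      Sum.elim_comp_inl, Sum.elim_comp_inr, Pi.zero_apply,
      add_zero, zero_add, smul_eq_mul] at h ⊢
    linear_combination h
  have E3 : Cc *ᵥ y = (1 - lam) • (Tc *ᵥ z) := by
    funext i
    have h := congrFun h2 (Sum.inr i)
    simp only [fromBlocks_mulVec, fromRows_mulVec, fromCols_mulVec_sumElim, zero_mulVec,
      mulVec_zero, Pi.add_apply, Pi.smul_apply, Sum.elim_inl, Sum.elim_inr,
      Sum.elim_comp_inl, Sum.elim_comp_inr, Pi.zero_apply,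
      add_zero, zero_add, smul_eq_mul] at h ⊢
    linear_combination h
  -- consequences
  have hx0 : Ac *ᵥ x + Btc *ᵥ y = 0 := by
    have h : lam • (Ac *ᵥ x + Btc *ᵥ y) = 0 := by
      funext i
      have h' := congrFun E1 i
      simp only [Pi.smul_apply, Pi.add_apply, Pi.zero_apply, smul_eq_mul] at h' ⊢
      linear_combination h'
    rcases smul_eq_zero.mp h with h' | h'
    · exact absurd h' hlam0
    · exact h'
  have hxA : x = (A⁻¹.map Complex.ofReal) *ᵥ (-(Btc *ᵥ y)) := by
    have hax : Ac *ᵥ x = -(Btc *ᵥ y) := eq_neg_of_add_eq_zero_left hx0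
    calc x = 1 *ᵥ x := (one_mulVec x).symm
      _ = ((A⁻¹.map Complex.ofReal) * Ac) *ᵥ x := by rw [hAinv]
      _ = (A⁻¹.map Complex.ofReal) *ᵥ (Ac *ᵥ x) := by rw [mulVec_mulVec]
      _ = _ := by rw [hax]
  have hBx : Bc *ᵥ x = -(((B * A⁻¹ * Bᵀ).map Complex.ofReal) *ᵥ y) := by
    have hmm : (B * A⁻¹ * Bᵀ).map Complex.ofReal *ᵥ y
        = Bc *ᵥ (A⁻¹.map Complex.ofReal *ᵥ (Btc *ᵥ y)) := by
      rw [mapC_mul, mapC_mul, ← hBc, ← hBtc, mulVec_mulVec, mulVec_mulVec]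
    rw [hxA, mulVec_neg, mulVec_neg, hmm]
  have hz : ((T⁻¹ * C).map Complex.ofReal) *ᵥ y = (1 - lam) • z := by
    calc ((T⁻¹ * C).map Complex.ofReal) *ᵥ y
        = ((T⁻¹.map Complex.ofReal) * Cc) *ᵥ y := by rw [mapC_mul, hCc]
      _ = (T⁻¹.map Complex.ofReal) *ᵥ (Cc *ᵥ y) := by rw [mulVec_mulVec]
      _ = (T⁻¹.map Complex.ofReal) *ᵥ ((1 - lam) • (Tc *ᵥ z)) := by rw [E3]
      _ = (1 - lam) • ((T⁻¹.map Complex.ofReal) *ᵥ (Tc *ᵥ z)) := by rw [mulVec_smul]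
      _ = (1 - lam) • (((T⁻¹.map Complex.ofReal) * Tc) *ᵥ z) := by rw [mulVec_mulVec]
      _ = (1 - lam) • z := by rw [hTinv, one_mulVec]
  -- scalar equations
  have ht : t = (1 - lam) * (star y ⬝ᵥ (Ctc *ᵥ z)) := by
    show star y ⬝ᵥ ((Cᵀ * T⁻¹ * C).map Complex.ofReal) *ᵥ y = (1 - lam) * (star y ⬝ᵥ (Ctc *ᵥ z))
    calc star y ⬝ᵥ ((Cᵀ * T⁻¹ * C).map Complex.ofReal) *ᵥ y
        = star y ⬝ᵥ (Ctc * ((T⁻¹ * C).map Complex.ofReal)) *ᵥ y := by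
          rw [Matrix.mul_assoc, mapC_mul, hCtc]
      _ = star y ⬝ᵥ Ctc *ᵥ (((T⁻¹ * C).map Complex.ofReal) *ᵥ y) := by rw [mulVec_mulVec]
      _ = star y ⬝ᵥ Ctc *ᵥ ((1 - lam) • z) := by rw [hz]
      _ = (1 - lam) * (star y ⬝ᵥ (Ctc *ᵥ z)) := by rw [mulVec_smul, dotProduct_smul, smul_eq_mul]
  have hs' : star y ⬝ᵥ ((-Bc) *ᵥ x) = s := by
    show _ = star y ⬝ᵥ ((B * A⁻¹ * Bᵀ).map Complex.ofReal) *ᵥ y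
    rw [neg_mulVec, hBx, neg_neg]
  have hs2 : -(star y ⬝ᵥ Bc *ᵥ x) = s := by
    rw [← hs', neg_mulVec, dotProduct_neg]
  have eq1 : s - (star y ⬝ᵥ (Ctc *ᵥ z))
      = (1 - lam) * ((star y ⬝ᵥ Sc *ᵥ y) - (star y ⬝ᵥ (Ctc *ᵥ z))) := by
    have h := congrArg (fun u => star y ⬝ᵥ u) E2
    simp only [dotProduct_add, dotProduct_smul, smul_eq_mul, neg_mulVec, dotProduct_neg] at h
    linear_combination h - hs2
  -- the value of a
  have haSc : a = star y ⬝ᵥ Sc *ᵥ y := rfl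
  set u : Fin n → ℂ := Btc *ᵥ y with hudef
  have hBtH : Btcᴴ = Bc := by
    rw [hBtc, hBc]
    ext i j
    simp [conjTranspose_apply, Matrix.map_apply, Complex.conj_ofReal]
  have hu : star y ⬝ᵥ ((Bc * Btc) *ᵥ y) = star u ⬝ᵥ u := by
    rw [← mulVec_mulVec, dotProduct_mulVec, hudef, star_mulVec, hBtH]
  have hScmap : Sc = (α : ℂ) • (1 : Matrix (Fin m) (Fin m) ℂ) + (β : ℂ) • (Bc * Btc) := by
    rw [hSc, hSdef, hBc, hBtc]
    ext i j
    simp only [Matrix.map_apply, Matrix.add_apply, Matrix.smul_apply, Matrix.one_apply,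
      Matrix.mul_apply, smul_eq_mul, Complex.ofReal_add, Complex.ofReal_mul, apply_ite
      Complex.ofReal, Complex.ofReal_one, Complex.ofReal_zero, Complex.ofReal_sum]
    all_goals (push_cast; try ring)
  have haval : a = (α : ℂ) + (β : ℂ) * (star u ⬝ᵥ u) := by
    rw [haSc, hScmap, add_mulVec, smul_mulVec, smul_mulVec, one_mulVec,
      dotProduct_add, dotProduct_smul, dotProduct_smul, smul_eq_mul, smul_eq_mul, hy, hu,
      mul_one]
  -- the real parts
  have haim : a.im = 0 := quad_im_zero S hSs y
  have hsim : s.im = 0 := by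
    refine quad_im_zero (B * A⁻¹ * Bᵀ) ?_ y
    rw [transpose_mul, transpose_mul, transpose_transpose, transpose_nonsing_inv, hAs,
      ← Matrix.mul_assoc]
  have htim : t.im = 0 := by
    refine quad_im_zero (Cᵀ * T⁻¹ * C) ?_ y
    rw [transpose_mul, transpose_mul, transpose_transpose, transpose_nonsing_inv, hTs,
      ← Matrix.mul_assoc]
  have hare : 0 < a.re := by
    rw [haval]
    have h1 : ((α : ℂ) + (β : ℂ) * (star u ⬝ᵥ u)).re
        = α + β * (star u ⬝ᵥ u).re := by
      simp [Complex.add_re, Complex.mul_re]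
    rw [h1]
    have h2 := mul_nonneg hβ.le (dot_star_self_re u)
    linarith
  have ha0 : a ≠ 0 := by
    intro h
    rw [h] at hare
    simp at hare
  -- assemble
  refine ⟨haim, ?_, ?_, hare, ?_⟩
  · show (2 * a - t - s).im = 0
    simp [Complex.sub_im, Complex.mul_im, haim, hsim, htim]
  · show (a - s).im = 0
    simp [Complex.sub_im, haim, hsim]
  · show lam ^ 2 - ((2 * a - t - s) / a) * lam + (a - s) / a = 0
    have hkey : (1 - lam) ^ 2 * a - (1 - lam) * t - (1 - lam) * s + t = 0 := by
      rw [← haSc] at eq1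
      linear_combination (-(1 - lam)) * eq1 + lam * ht
    field_simp
    linear_combination hkey
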